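/- Let e be an integer, α ∈ Sₙ with order w = orderOf α, let y ∈ Sₙ be a solution of the power conjugate equation (e*α), and let r ≥ 2 be such that y has at least one cycle of length r. Let H_r be the set of points lying on y-cycles of length r, i.e. H_r = {x : y x ≠ x ∧ (y.cycleOf x).support.card = r}, and let t_r be the number of r-cycles of y. Then: (a) α maps H_r onto itself (α(H_r) = H_r); (b) |H_r| = t_r · r and t_r · r ∈ F₁(α); (c) for every c ∈ H_r, if d ≥ 1 is the least positive integer with α^d(c) ∈ (y.cycleOf c).support, then d divides w and d · r ∈ F_d(α). -/

import Mathlib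

open Equiv Equiv.Perm Finset

/-- `cycleCount α j` is the number of cycles of length `j` of `α ∈ Sₙ`, counting each
fixed point as a cycle of length `1`. -/
def cycleCount {n : ℕ} (α : Equiv.Perm (Fin n)) (j : ℕ) : ℕ :=
  if j = 1 then n - α.support.card else α.cycleType.count j

/-- The `d`-range `F_d(α)`: all sums `∑_j q_j · j` with `0 ≤ q_j ≤ g_j` and `q_j = 0`
whenever `d ∤ j`, where `g_j = cycleCount α j`. -/
def dRange {n : ℕ} (α : Equiv.Perm (Fin n)) (d : ℕ) : Set ℕ :=
  { m | ∃ q : ℕ → ℕ, (∀ j, q j ≤ cycleCount α j) ∧ (∀ j, ¬ d ∣ j → q j = 0) ∧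
      m = ∑ j ∈ Finset.range (n + 1), q j * j }

section aux

variable {n : ℕ}

lemma conj_cycleOf_support (α y : Equiv.Perm (Fin n)) (x : Fin n) :
    ((α * y * α⁻¹).cycleOf (α x)).support = (y.cycleOf x).support.image α := by
  ext z
  rw [Equiv.Perm.mem_support_cycleOf_iff, Equiv.Perm.sameCycle_conj, Finset.mem_image]
  simp only [Equiv.Perm.support_conj, Finset.mem_map, Equiv.toEmbedding_apply,
    (show α⁻¹ (α x) = x by simp)]
  constructor
  · rintro ⟨hs, hx⟩
    refine ⟨α⁻¹ z, Equiv.Perm.mem_support_cycleOf_iff.mpr ⟨hs, ?_⟩, by simp⟩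
    obtain ⟨a, ha, ha'⟩ := hx
    rwa [← α.injective ha']
  · rintro ⟨a, ha, rfl⟩
    rw [Equiv.Perm.mem_support_cycleOf_iff] at ha
    exact ⟨by simpa using ha.1, ⟨x, ha.2, rfl⟩⟩

lemma zpow_cycleOf_support_eq {α y : Equiv.Perm (Fin n)} {e : ℤ}
    (hy : α * y * α⁻¹ = y ^ e) (x : Fin n) :
    ((y ^ e).cycleOf x).support = (y.cycleOf x).support := by
  have hsub : ∀ z : Fin n, ((y ^ e).cycleOf z).support ⊆ (y.cycleOf z).support := by
    intro z w hw
    rw [Equiv.Perm.mem_support_cycleOf_iff] at hw ⊢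
    exact ⟨hw.1.of_zpow, Equiv.Perm.support_zpow_le y e hw.2⟩
  have hconj : ∀ z : Fin n,
      ((y ^ e).cycleOf (α z)).support = (y.cycleOf z).support.image α := by
    intro z; rw [← hy]; exact conj_cycleOf_support α y z
  have hsum : ∑ z : Fin n, ((y ^ e).cycleOf z).support.card
      = ∑ z : Fin n, (y.cycleOf z).support.card := by
    rw [← Equiv.sum_comp α (fun z => ((y ^ e).cycleOf z).support.card)]
    refine Finset.sum_congr rfl fun z _ => ?_
    rw [hconj z, Finset.card_image_of_injective _ α.injective]
  have hall := (Finset.sum_eq_sum_iff_of_le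
    (fun z (_ : z ∈ Finset.univ) => Finset.card_le_card (hsub z))).mp hsum
  exact Finset.eq_of_subset_of_card_le (hsub x)
    (le_of_eq (hall x (Finset.mem_univ x)).symm)

end aux
section aux2

variable {n : ℕ}

lemma img_cycleOf_support {α y : Equiv.Perm (Fin n)} {e : ℤ}
    (hy : α * y * α⁻¹ = y ^ e) (x : Fin n) :
    (y.cycleOf x).support.image α = (y.cycleOf (α x)).support := by
  rw [← conj_cycleOf_support α y x, hy, zpow_cycleOf_support_eq hy]

lemma img_pow_cycleOf_support {α y : Equiv.Perm (Fin n)} {e : ℤ}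
    (hy : α * y * α⁻¹ = y ^ e) (k : ℕ) (x : Fin n) :
    (y.cycleOf x).support.image (α ^ k) = (y.cycleOf ((α ^ k) x)).support := by
  induction k generalizing x with
  | zero => simp
  | succ k ih =>
    have h1 : ∀ z : Fin n, (α ^ (k + 1)) z = (α ^ k) (α z) := by
      intro z; rw [pow_succ]; try rfl
    have h2 : (y.cycleOf x).support.image (α ^ (k + 1))
        = ((y.cycleOf x).support.image α).image (α ^ k) := by
      rw [Finset.image_image]
      exact Finset.image_congr fun z _ => (h1 z).symm
    rw [h2, img_cycleOf_support hy, ih (α x)]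
    exact congrArg (fun t => (y.cycleOf t).support) (h1 x).symm

lemma image_pow_add (α : Equiv.Perm (Fin n)) (s : Finset (Fin n)) (a b : ℕ) :
    s.image (α ^ (a + b)) = (s.image (α ^ b)).image (α ^ a) := by
  rw [Finset.image_image]
  exact Finset.image_congr fun z _ => by rw [pow_add]; rfl

/-- Main counting lemma: if `s` is `α`-invariant, contains fixed points of `α` only
when `d = 1`, and every `α`-cycle meeting `s` has length divisible by `d`, then
`s.card ∈ dRange α d`. -/
lemma card_mem_dRange (α : Equiv.Perm (Fin n)) (d : ℕ) (s : Finset (Fin n))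
    (hs : s.image α = s)
    (hfix : ∀ x ∈ s, α x = x → d = 1)
    (hcyc : ∀ x ∈ s, α x ≠ x → d ∣ (α.cycleOf x).support.card) :
    s.card ∈ dRange α d := by
  classical
  rcases Nat.eq_zero_or_pos n with hn | hn
  · refine ⟨fun _ => 0, fun j => Nat.zero_le _, fun _ _ => rfl, ?_⟩
    have : s.card ≤ 0 := by
      have := Finset.card_le_univ s
      simpa [hn] using this
    simp [Nat.le_zero.mp this]
  -- invariance under powers
  have hmem : ∀ x ∈ s, α x ∈ s := fun x hx => by
    rw [← hs]; exact Finset.mem_image_of_mem α hx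
  have hinv : ∀ x ∈ s, α⁻¹ x ∈ s := by
    intro x hx
    rw [← hs] at hx
    obtain ⟨z, hz, rfl⟩ := Finset.mem_image.mp hx
    simpa using hz
  have hzpow : ∀ (k : ℤ) (x : Fin n), x ∈ s → (α ^ k) x ∈ s := by
    intro k
    induction k using Int.induction_on with
    | zero => simp only [zpow_zero, Equiv.Perm.one_apply]; exact fun x hx => hx
    | succ k ih =>
      intro x hx
      have : (α ^ ((k : ℤ) + 1)) x = α ((α ^ (k : ℤ)) x) := by
        rw [add_comm ((k : ℤ)) 1, zpow_one_add]
        try rfl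
      rw [this]
      exact hmem _ (ih x hx)
    | pred k ih =>
      intro x hx
      have : (α ^ (-(k : ℤ) - 1)) x = α⁻¹ ((α ^ (-(k : ℤ))) x) := by
        rw [sub_eq_add_neg, add_comm, zpow_add, zpow_neg_one]
        try rfl
      rw [this]
      exact hinv _ (ih x hx)
  have hsupp : ∀ x ∈ s, (α.cycleOf x).support ⊆ s := by
    intro x hx z hz
    rw [Equiv.Perm.mem_support_cycleOf_iff] at hz
    obtain ⟨k, hk⟩ := hz.1
    exact hk ▸ hzpow k x hx
  -- split s into fixed and moved points
  set s1 := s.filter (fun x => α x = x) with hs1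
  set s2 := s.filter (fun x => ¬ α x = x) with hs2
  set G := α.cycleFactorsFinset.filter (fun c => c.support ⊆ s) with hG
  have hs2eq : s2 = G.biUnion (fun c => c.support) := by
    ext x
    simp only [hs2, hG, Finset.mem_filter, Finset.mem_biUnion]
    constructor
    · rintro ⟨hx, hmov⟩
      refine ⟨α.cycleOf x, ⟨?_, hsupp x hx⟩, ?_⟩
      · exact Equiv.Perm.cycleOf_mem_cycleFactorsFinset_iff.mpr
          (Equiv.Perm.mem_support.mpr hmov)
      · exact Equiv.Perm.mem_support_cycleOf_iff.mpr
          ⟨Equiv.Perm.SameCycle.refl α x, Equiv.Perm.mem_support.mpr hmov⟩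
    · rintro ⟨c, ⟨hc, hcs⟩, hxc⟩
      refine ⟨hcs hxc, Equiv.Perm.mem_support.mp
        (Equiv.Perm.mem_cycleFactorsFinset_support_le hc hxc)⟩
  have hGdisj : ∀ c ∈ G, ∀ c' ∈ G, c ≠ c' → Disjoint c.support c'.support := by
    intro c hc c' hc' hne
    exact Equiv.Perm.Disjoint.disjoint_support
      (α.cycleFactorsFinset_pairwise_disjoint
        (Finset.mem_filter.mp hc).1 (Finset.mem_filter.mp hc').1 hne)
  have hs2card : s2.card = ∑ c ∈ G, c.support.card := by
    rw [hs2eq]; exact Finset.card_biUnion hGdisj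
  -- the witness
  refine ⟨fun j => if j = 1 then s1.card
      else (G.filter (fun c => c.support.card = j)).card, ?_, ?_, ?_⟩
  · intro j
    dsimp only
    by_cases hj : j = 1
    · simp only [hj, if_pos rfl, cycleCount, if_pos rfl]
      have : s1 ⊆ α.supportᶜ := by
        intro x hx
        rw [Finset.mem_compl, Equiv.Perm.notMem_support]
        exact (Finset.mem_filter.mp hx).2
      calc s1.card ≤ α.supportᶜ.card := Finset.card_le_card this
        _ = n - α.support.card := by rw [Finset.card_compl, Fintype.card_fin]
    · simp only [if_neg hj, cycleCount, if_neg hj]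
      have hsub : G.filter (fun c => c.support.card = j)
          ⊆ α.cycleFactorsFinset.filter (fun c => c.support.card = j) := by
        intro c hc
        simp only [Finset.mem_filter, hG] at hc ⊢
        exact ⟨hc.1.1, hc.2⟩
      refine le_trans (Finset.card_le_card hsub) (le_of_eq ?_)
      rw [Equiv.Perm.cycleType_def, Multiset.count_map, Finset.card_def,
        Finset.filter_val]
      congr 1
      apply Multiset.filter_congr
      intro c _
      simp [eq_comm, Function.comp]
  · intro j hdj
    dsimp only
    by_cases hj : j = 1
    · subst hj
      rw [if_pos rfl, hs1, Finset.card_eq_zero, Finset.filter_eq_empty_iff]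
      intro x hx hfx
      exact hdj (by rw [hfix x hx hfx])
    · rw [if_neg hj, Finset.card_eq_zero, Finset.filter_eq_empty_iff]
      rintro c hc rfl
      obtain ⟨hcf, hcs⟩ := Finset.mem_filter.mp hc
      have hcycle := (Equiv.Perm.mem_cycleFactorsFinset_iff.mp hcf).1
      obtain ⟨x, hxc⟩ := hcycle.nonempty_support
      have hxs : x ∈ s := hcs hxc
      have hxmov : α x ≠ x := Equiv.Perm.mem_support.mp
        (Equiv.Perm.mem_cycleFactorsFinset_support_le hcf hxc)
      have := hcyc x hxs hxmov
      rw [← Equiv.Perm.cycle_is_cycleOf hxc hcf] at this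
      exact hdj this
  · -- the sum
    have h1mem : (1 : ℕ) ∈ Finset.range (n + 1) := Finset.mem_range.mpr (by omega)
    rw [Finset.sum_eq_sum_sdiff_singleton_add h1mem]
    have hterm1 : (if (1:ℕ) = 1 then s1.card
        else (G.filter (fun c => c.support.card = 1)).card) * 1 = s1.card := by simp
    rw [hterm1]
    have hrest : ∑ j ∈ Finset.range (n + 1) \ {1},
        (if j = 1 then s1.card
          else (G.filter (fun c => c.support.card = j)).card) * j
        = ∑ j ∈ Finset.range (n + 1) \ {1},
            (G.filter (fun c => c.support.card = j)).card * j := by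
      refine Finset.sum_congr rfl fun j hj => ?_
      have : j ≠ 1 := by
        simp only [Finset.mem_sdiff, Finset.mem_singleton] at hj
        exact hj.2
      rw [if_neg this]
    rw [hrest]
    have hfib : ∑ j ∈ Finset.range (n + 1),
        (G.filter (fun c => c.support.card = j)).card * j = s2.card := by
      rw [hs2card]
      rw [← Finset.sum_fiberwise_of_maps_to
        (g := fun c : Equiv.Perm (Fin n) => c.support.card)
        (t := Finset.range (n + 1))
        (fun c _ => Finset.mem_range.mpr
          (Nat.lt_succ_of_le (le_trans (Finset.card_le_univ _)
            (le_of_eq (Fintype.card_fin n)))))]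
      refine Finset.sum_congr rfl fun j _ => ?_
      rw [Finset.sum_congr rfl (fun c hc => (Finset.mem_filter.mp hc).2),
        Finset.sum_const, smul_eq_mul, mul_comm]
    have hone : (G.filter (fun c => c.support.card = 1)).card * 1 = 0 := by
      rw [Finset.card_eq_zero.mpr, Nat.zero_mul]
      rw [Finset.filter_eq_empty_iff]
      intro c hc
      have hcycle := (Equiv.Perm.mem_cycleFactorsFinset_iff.mp
        (Finset.mem_filter.mp hc).1).1
      have := hcycle.two_le_card_support
      omega
    have : ∑ j ∈ Finset.range (n + 1) \ {1},
        (G.filter (fun c => c.support.card = j)).card * j = s2.card := by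
      rw [← hfib, Finset.sum_eq_sum_sdiff_singleton_add h1mem
        (fun j => (G.filter (fun c => c.support.card = j)).card * j), hone, add_zero]
    rw [this, add_comm]
    exact (Finset.card_filter_add_card_filter_not (fun x => α x = x)).symm

end aux2
section auxb

variable {n : ℕ}

lemma count_cycleType_eq (α : Equiv.Perm (Fin n)) (j : ℕ) :
    α.cycleType.count j
      = (α.cycleFactorsFinset.filter (fun c => c.support.card = j)).card := by
  rw [Equiv.Perm.cycleType_def, Multiset.count_map, Finset.card_def, Finset.filter_val]
  congr 1
  apply Multiset.filter_congr
  intro c _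
  simp [eq_comm, Function.comp]

end auxb

theorem stmt_7 (n : ℕ) (e : ℤ) (α y : Equiv.Perm (Fin n))
    (hy : α * y * α⁻¹ = y ^ e) (w : ℕ) (hw : w = orderOf α)
    (r : ℕ) (hr2 : 2 ≤ r) (hr : r ∈ y.cycleType)
    (Hr : Finset (Fin n))
    (hHr : Hr = Finset.univ.filter fun x => y x ≠ x ∧ (y.cycleOf x).support.card = r)
    (tr : ℕ) (htr : tr = y.cycleType.count r) :
    Hr.image α = Hr ∧
    (Hr.card = tr * r ∧ tr * r ∈ dRange α 1) ∧
    ∀ c ∈ Hr, ∀ d : ℕ, 1 ≤ d →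
      (α ^ d) c ∈ (y.cycleOf c).support →
      (∀ d' : ℕ, 1 ≤ d' → (α ^ d') c ∈ (y.cycleOf c).support → d ≤ d') →
      d ∣ w ∧ d * r ∈ dRange α d := by
  classical
  -- support of `y ^ e` equals the support of `y`
  have hse : (y ^ e).support = y.support := by
    refine Finset.eq_of_subset_of_card_le (Equiv.Perm.support_zpow_le y e)
      (le_of_eq ?_)
    rw [← hy, Equiv.Perm.card_support_conj]
  have h2 : y.support = y.support.map α.toEmbedding := by
    have h2 := Equiv.Perm.support_conj (σ := α) (τ := y)
    rwa [hy, hse] at h2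
  have hsupp_inv : ∀ x : Fin n, α x ∈ y.support ↔ x ∈ y.support := by
    intro x
    constructor
    · intro hx
      rw [h2] at hx
      obtain ⟨a, ha, hax⟩ := Finset.mem_map.mp hx
      exact (α.injective hax) ▸ ha
    · intro hx
      rw [h2]
      exact Finset.mem_map_of_mem _ hx
  -- part (a)
  have hsub : Hr.image α ⊆ Hr := by
    intro z hz
    obtain ⟨x, hx, rfl⟩ := Finset.mem_image.mp hz
    rw [hHr, Finset.mem_filter] at hx ⊢
    obtain ⟨-, hx1, hx2⟩ := hx
    refine ⟨Finset.mem_univ _, ?_, ?_⟩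
    · rw [← Equiv.Perm.mem_support] at hx1 ⊢
      exact (hsupp_inv x).mpr hx1
    · rw [← img_cycleOf_support hy x,
        Finset.card_image_of_injective _ α.injective]
      exact hx2
  have ha : Hr.image α = Hr :=
    Finset.eq_of_subset_of_card_le hsub
      (le_of_eq (Finset.card_image_of_injective _ α.injective).symm)
  -- part (b): |H_r| = t_r * r
  set F := y.cycleFactorsFinset.filter (fun c => c.support.card = r) with hF
  have hHrF : Hr = F.biUnion (fun c => c.support) := by
    rw [hHr]
    ext x
    simp only [Finset.mem_filter, Finset.mem_univ, true_and, Finset.mem_biUnion, hF]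
    constructor
    · rintro ⟨h1, h2⟩
      exact ⟨y.cycleOf x,
        ⟨Equiv.Perm.cycleOf_mem_cycleFactorsFinset_iff.mpr
          (Equiv.Perm.mem_support.mpr h1), h2⟩,
        Equiv.Perm.mem_support_cycleOf_iff.mpr
          ⟨Equiv.Perm.SameCycle.refl y x, Equiv.Perm.mem_support.mpr h1⟩⟩
    · rintro ⟨c, ⟨hc, hcr⟩, hxc⟩
      have hco := Equiv.Perm.cycle_is_cycleOf hxc hc
      refine ⟨Equiv.Perm.mem_support.mp
        (Equiv.Perm.mem_cycleFactorsFinset_support_le hc hxc), ?_⟩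
      rw [← hco]; exact hcr
  have hFdisj : ∀ c ∈ F, ∀ c' ∈ F, c ≠ c' → Disjoint c.support c'.support := by
    intro c hc c' hc' hne
    exact Equiv.Perm.Disjoint.disjoint_support
      (y.cycleFactorsFinset_pairwise_disjoint
        (Finset.mem_filter.mp hc).1 (Finset.mem_filter.mp hc').1 hne)
  have hcard : Hr.card = tr * r := by
    rw [hHrF, Finset.card_biUnion hFdisj,
      Finset.sum_congr rfl (fun c hc => (Finset.mem_filter.mp hc).2),
      Finset.sum_const, smul_eq_mul, htr, count_cycleType_eq]
  refine ⟨ha, ⟨hcard, ?_⟩, ?_⟩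
  · -- t_r * r ∈ F_1(α)
    rw [← hcard]
    exact card_mem_dRange α 1 Hr ha (fun _ _ _ => rfl) (fun _ _ _ => one_dvd _)
  -- part (c)
  intro c hc d hd1 hdc hdmin
  rw [hHr, Finset.mem_filter] at hc
  obtain ⟨-, hc1, hc2⟩ := hc
  set S := (y.cycleOf c).support with hS
  have hcS : c ∈ S := Equiv.Perm.mem_support_cycleOf_iff.mpr
    ⟨Equiv.Perm.SameCycle.refl y c, Equiv.Perm.mem_support.mpr hc1⟩
  have hScard : S.card = r := hc2
  have hd0 : 0 < d := hd1
  have hblock : ∀ a ∈ S, (y.cycleOf a).support = S := by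
    intro a ha
    rw [hS, ← Equiv.Perm.SameCycle.cycleOf_eq
      (Equiv.Perm.mem_support_cycleOf_iff.mp ha).1]
  have hSd : S.image (α ^ d) = S := by
    rw [hS, img_pow_cycleOf_support hy d c]
    exact hblock _ hdc
  have hmul : ∀ q : ℕ, S.image (α ^ (d * q)) = S := by
    intro q
    induction q with
    | zero => simp
    | succ q ih =>
      have hdq : d * (q + 1) = d * q + d := by ring
      rw [hdq, image_pow_add, hSd, ih]
  have hImod : ∀ k : ℕ, S.image (α ^ k) = S.image (α ^ (k % d)) := by
    intro k
    conv_lhs => rw [← Nat.mod_add_div k d]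
    rw [image_pow_add, hmul]
  have key : ∀ i j : ℕ, i < j → j < d → S.image (α ^ i) = S.image (α ^ j) → False := by
    intro i j hij hjd hE
    have h1 : S.image (α ^ (i + (j - i))) = S.image (α ^ i) := by
      rw [Nat.add_sub_cancel' (le_of_lt hij), hE]
    rw [image_pow_add] at h1
    have h2 : S.image (α ^ (j - i)) = S :=
      Finset.image_injective (Equiv.injective (α ^ i)) h1
    have h3 : (α ^ (j - i)) c ∈ S := by
      rw [← h2]
      exact Finset.mem_image_of_mem _ hcS
    have := hdmin (j - i) (by omega) h3
    omega
  have hdisj : ∀ i j : ℕ, i < d → j < d → i ≠ j →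
      Disjoint (S.image (α ^ i)) (S.image (α ^ j)) := by
    intro i j hi hj hne
    rw [Finset.disjoint_left]
    intro z hzi hzj
    have hzi' := hzi; have hzj' := hzj
    rw [hS, img_pow_cycleOf_support hy] at hzi' hzj'
    have h1 := (Equiv.Perm.mem_support_cycleOf_iff.mp hzi').1
    have h2 := (Equiv.Perm.mem_support_cycleOf_iff.mp hzj').1
    have heq : y.cycleOf ((α ^ i) c) = y.cycleOf ((α ^ j) c) :=
      Equiv.Perm.SameCycle.cycleOf_eq (h1.trans h2.symm)
    have hEq : S.image (α ^ i) = S.image (α ^ j) := by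
      rw [hS, img_pow_cycleOf_support hy, img_pow_cycleOf_support hy, heq]
    rcases lt_or_gt_of_ne hne with h | h
    · exact key i j h hj hEq
    · exact key j i h hi hEq.symm
  have hαw : (α ^ w) c = c := by
    rw [hw, pow_orderOf_eq_one]; rfl
  constructor
  · -- d ∣ w
    have h1 : c ∈ S.image (α ^ (w % d)) := by
      rw [← hImod w]
      exact Finset.mem_image.mpr ⟨c, hcS, hαw⟩
    have h2 : c ∈ S.image (α ^ (0 : ℕ)) := by simpa using hcS
    by_contra hnd
    have hmod : w % d ≠ 0 := fun h => hnd (Nat.dvd_of_mod_eq_zero h)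
    exact Finset.disjoint_left.mp
      (hdisj (w % d) 0 (Nat.mod_lt _ hd0) hd0 hmod) h1 h2
  · -- d * r ∈ F_d(α)
    set B := (Finset.range d).biUnion (fun i => S.image (α ^ i)) with hB
    have hBcard : B.card = d * r := by
      rw [hB, Finset.card_biUnion (fun i hi j hj hne =>
        hdisj i j (Finset.mem_range.mp hi) (Finset.mem_range.mp hj) hne),
        Finset.sum_congr rfl (fun i _ => by
          rw [Finset.card_image_of_injective _ (Equiv.injective _), hScard]),
        Finset.sum_const, Finset.card_range, smul_eq_mul]
    have hBinv : B.image α = B := by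
      refine Finset.eq_of_subset_of_card_le ?_
        (le_of_eq (Finset.card_image_of_injective _ α.injective).symm)
      rw [hB, Finset.biUnion_image]
      intro z hz
      rw [Finset.mem_biUnion] at hz
      obtain ⟨i, hi, hzi⟩ := hz
      have hstep : (S.image (α ^ i)).image α = S.image (α ^ (1 + i)) := by
        rw [image_pow_add, pow_one]
      rw [hstep] at hzi
      rcases Nat.lt_or_ge (1 + i) d with hlt | hge
      · exact Finset.mem_biUnion.mpr ⟨1 + i, Finset.mem_range.mpr hlt, hzi⟩
      · have h1i : 1 + i = d := by
          have := Finset.mem_range.mp hi; omega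
        rw [h1i, hSd] at hzi
        refine Finset.mem_biUnion.mpr ⟨0, Finset.mem_range.mpr hd0, ?_⟩
        simpa using hzi
    have hBfix : ∀ x ∈ B, α x = x → d = 1 := by
      intro x hx hfx
      rw [hB, Finset.mem_biUnion] at hx
      obtain ⟨i, hi, hxi⟩ := hx
      obtain ⟨z, hz, rfl⟩ := Finset.mem_image.mp hxi
      have hz' : α z = z := by
        apply (α ^ i).injective
        calc (α ^ i) (α z) = α ((α ^ i) z) := by
              rw [← Equiv.Perm.mul_apply, ← pow_succ, pow_succ',
                Equiv.Perm.mul_apply]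
          _ = (α ^ i) z := hfx
      have hSz : (y.cycleOf z).support = S := hblock z hz
      have himgz : S.image α = S := by
        calc S.image α = (y.cycleOf z).support.image α := by rw [hSz]
          _ = (y.cycleOf (α z)).support := img_cycleOf_support hy z
          _ = (y.cycleOf z).support := by rw [hz']
          _ = S := hSz
      have hα1 : (α ^ (1 : ℕ)) c ∈ S := by
        rw [pow_one, ← himgz]
        exact Finset.mem_image_of_mem α hcS
      have := hdmin 1 le_rfl hα1
      omega
    have hBcyc : ∀ x ∈ B, α x ≠ x → d ∣ (α.cycleOf x).support.card := by
      intro x hx hfx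
      rw [hB, Finset.mem_biUnion] at hx
      obtain ⟨i, hi, hxi⟩ := hx
      set L := (α.cycleOf x).support.card with hL
      have hxL : (α ^ L) x = x := by
        have h0 := Equiv.Perm.pow_mod_card_support_cycleOf_self_apply α L x
        rw [← hL, Nat.mod_self, pow_zero] at h0
        exact h0.symm
      have hx2 : x ∈ S.image (α ^ ((L + i) % d)) := by
        rw [← hImod, image_pow_add]
        exact Finset.mem_image.mpr ⟨x, hxi, hxL⟩
      have hii : (L + i) % d = i := by
        by_contra hne
        exact Finset.disjoint_left.mp
          (hdisj ((L + i) % d) i (Nat.mod_lt _ hd0) (Finset.mem_range.mp hi) hne)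
          hx2 hxi
      have hmodeq : (L + i) % d = i % d := by
        rw [hii, Nat.mod_eq_of_lt (Finset.mem_range.mp hi)]
      have hdvd : d ∣ L + i - i :=
        (Nat.modEq_iff_dvd' (Nat.le_add_left i L)).mp hmodeq.symm
      simpa using hdvd
    rw [← hBcard]
    exact card_mem_dRange α d B hBinv hBfix hBcyc
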